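/- If every right R-module is pseudo-projective, then R is a semisimple (artinian) ring. -/

import Mathlib

open LinearMap Submodule

/-- A submodule N of M is small (superfluous) in M:
N + K = M implies K = M for every submodule K. -/
def IsSmall {R : Type*} [Ring R] {M : Type*} [AddCommGroup M] [Module R M]
    (N : Submodule R M) : Prop :=
  ∀ K : Submodule R M, N ⊔ K = ⊤ → K = ⊤

/-- M is a dual automorphism-invariant R-module: for any two small submodules
K₁, K₂ of M, every surjective homomorphism η : M/K₁ → M/K₂ whose kernel is
small in M/K₁ lifts to an endomorphism φ of M (i.e. π₂ ∘ φ = η ∘ π₁). -/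
def IsDualAutoInv (R M : Type*) [Ring R] [AddCommGroup M] [Module R M] : Prop :=
  ∀ (K₁ K₂ : Submodule R M), IsSmall K₁ → IsSmall K₂ →
    ∀ η : (M ⧸ K₁) →ₗ[R] (M ⧸ K₂), Function.Surjective η →
      IsSmall (LinearMap.ker η) →
      ∃ φ : M →ₗ[R] M, K₂.mkQ ∘ₗ φ = η ∘ₗ K₁.mkQ

universe u

/-- M is pseudo-projective: every surjective homomorphism M → M/N lifts to an
endomorphism of M. -/
def IsPseudoProjective (R M : Type*) [Ring R] [AddCommGroup M] [Module R M] : Prop :=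
  ∀ (N : Submodule R M) (φ : M →ₗ[R] M ⧸ N), Function.Surjective φ →
    ∃ ψ : M →ₗ[R] M, N.mkQ ∘ₗ ψ = φ

/-- If every R-module is pseudo-projective, then R is semisimple artinian. -/
theorem every_module_pseudoProjective_isSemisimpleRing (R : Type u) [Ring R]
    (h : ∀ (M : Type u) [AddCommGroup M] [Module R M], IsPseudoProjective R M) :
    IsSemisimpleRing R := by
  -- It suffices to show every submodule of R has a complement.
  refine IsSemisimpleModule.mk (toComplementedLattice := ⟨fun N => ?_⟩)
  -- Step 1: produce a linear section s of the quotient map N.mkQ.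
  obtain ⟨s, hs⟩ : ∃ s : (R ⧸ N) →ₗ[R] R, ∀ x, N.mkQ (s x) = x := by
    set T := R × (R ⧸ N)
    set α : T →ₗ[R] (R ⧸ N) × (R ⧸ N) :=
      (LinearMap.snd R R (R ⧸ N)).prod (N.mkQ ∘ₗ LinearMap.fst R R (R ⧸ N)) with hαdef
    have hα : Function.Surjective α := by
      rintro ⟨a, b⟩
      obtain ⟨r, hr⟩ := N.mkQ_surjective b
      exact ⟨(r, a), Prod.ext rfl hr⟩
    set σ : T →ₗ[R] (R ⧸ N) × (R ⧸ N) :=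
      (N.mkQ ∘ₗ LinearMap.fst R R (R ⧸ N)).prod (LinearMap.snd R R (R ⧸ N)) with hσdef
    have hσ : Function.Surjective σ := by
      rintro ⟨a, b⟩
      obtain ⟨r, hr⟩ := N.mkQ_surjective a
      exact ⟨(r, b), Prod.ext hr rfl⟩
    set e := α.quotKerEquivOfSurjective hα with hedef
    have he : ∀ t : T, e ((LinearMap.ker α).mkQ t) = α t := by
      intro t
      simp [hedef, LinearMap.quotKerEquivOfSurjective, Submodule.mkQ_apply,
        LinearMap.quotKerEquivRange]
    set φ : T →ₗ[R] T ⧸ LinearMap.ker α := e.symm.toLinearMap ∘ₗ σ with hφdef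
    have hφ : Function.Surjective φ :=
      (EquivLike.surjective e.symm).comp hσ
    obtain ⟨ψ, hψ⟩ := h T (LinearMap.ker α) φ hφ
    have key : ∀ t : T, α (ψ t) = σ t := by
      intro t
      have := congrArg (fun f => e (f t)) hψ
      simp only [LinearMap.comp_apply, hφdef, LinearEquiv.coe_coe,
        LinearEquiv.apply_symm_apply] at this
      rw [← he (ψ t)]
      exact this
    refine ⟨(LinearMap.fst R R (R ⧸ N)) ∘ₗ ψ ∘ₗ LinearMap.inr R R (R ⧸ N), fun x => ?_⟩
    have := congrArg Prod.snd (key (0, x))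
    exact this
  -- Step 2: range s is a complement of N.
  refine ⟨LinearMap.range s, ?_, ?_⟩
  · rw [disjoint_iff]
    ext x
    simp only [Submodule.mem_inf, Submodule.mem_bot, LinearMap.mem_range]
    constructor
    · rintro ⟨hxN, y, rfl⟩
      have : y = 0 := by
        have h0 : N.mkQ (s y) = 0 := (Submodule.Quotient.mk_eq_zero N).2 hxN
        rw [hs y] at h0; exact h0
      rw [this, map_zero]
    · rintro rfl
      exact ⟨N.zero_mem, 0, map_zero s⟩
  · rw [codisjoint_iff]
    ext x
    simp only [Submodule.mem_top, iff_true]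
    have hx : x - s (N.mkQ x) ∈ N := by
      rw [← Submodule.Quotient.mk_eq_zero N]
      have : N.mkQ (x - s (N.mkQ x)) = 0 := by
        rw [map_sub, hs]; simp
      simpa using this
    have : x = (x - s (N.mkQ x)) + s (N.mkQ x) := by abel
    rw [this]
    exact Submodule.add_mem_sup hx ⟨N.mkQ x, rfl⟩
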